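/- Let Θ(λ_G, λ_B) = λ_G ψ_B(2δ+αψ_G)/(2(δψ_G+δψ_B+αψ_Gψ_B)) + λ_B ψ_G(2δ+αψ_B)/(2(δψ_G+δψ_B+αψ_Gψ_B)) where ψ_j = λ_j^k, k ∈ (0,1), δ, α > 0. Then Θ is continuous and strictly increasing in each of λ_G and λ_B on (0,∞)². -/

import Mathlib

open Set

lemma theta_mono_aux (k δ α b : ℝ) (hk : k ∈ Set.Ioo (0:ℝ) 1) (hδ : 0 < δ)
    (hα : 0 < α) (hb : 0 < b) :
    StrictMonoOn
      (fun x : ℝ =>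
        x * b ^ k * (2 * δ + α * x ^ k) /
            (2 * (δ * x ^ k + δ * b ^ k + α * x ^ k * b ^ k)) +
          b * x ^ k * (2 * δ + α * b ^ k) /
            (2 * (δ * x ^ k + δ * b ^ k + α * x ^ k * b ^ k)))
      (Set.Ioi 0) := by
  intro x hx y hy hxy
  simp only [Set.mem_Ioi] at hx hy
  have ht : (0:ℝ) < x ^ k := Real.rpow_pos_of_pos hx k
  have hu : (0:ℝ) < y ^ k := Real.rpow_pos_of_pos hy k
  have hβ : (0:ℝ) < b ^ k := Real.rpow_pos_of_pos hb k
  have htu : x ^ k < y ^ k := Real.rpow_lt_rpow hx.le hxy hk.1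
  -- key: x * y^k < y * x^k
  have hkey : x * y ^ k < y * x ^ k := by
    have h1 : x ^ (1 - k) < y ^ (1 - k) :=
      Real.rpow_lt_rpow hx.le hxy (by linarith [hk.2])
    have hx' : x ^ (1 - k) * x ^ k = x := by
      rw [← Real.rpow_add hx]; simp
    have hy' : y ^ (1 - k) * y ^ k = y := by
      rw [← Real.rpow_add hy]; simp
    calc x * y ^ k = x ^ (1-k) * x ^ k * y ^ k := by rw [hx']
    _ < y ^ (1-k) * y ^ k * x ^ k := by
        nlinarith [mul_pos (mul_pos ht hu) (sub_pos.2 h1)]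
    _ = y * x ^ k := by rw [hy']
  have hD1 : (0:ℝ) < 2 * (δ * x ^ k + δ * b ^ k + α * x ^ k * b ^ k) := by positivity
  have hD2 : (0:ℝ) < 2 * (δ * y ^ k + δ * b ^ k + α * y ^ k * b ^ k) := by positivity
  simp only
  rw [← add_div, ← add_div, div_lt_div_iff₀ hD1 hD2]
  have h2 : x * x ^ k < y * y ^ k := by nlinarith
  nlinarith [mul_pos (mul_pos (mul_pos hδ hβ) (add_pos hδ (mul_pos hα hβ))) (sub_pos.2 hkey),
    mul_pos (mul_pos (mul_pos hδ hβ) (mul_pos hδ hβ)) (sub_pos.2 hxy),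
    mul_pos (mul_pos (mul_pos hα hβ) (add_pos hδ (mul_pos hα hβ)))
      (mul_pos (mul_pos ht hu) (sub_pos.2 hxy)),
    mul_pos (mul_pos (mul_pos hα hβ) (mul_pos hδ hβ)) (sub_pos.2 h2),
    mul_pos (mul_pos (mul_pos (show (0:ℝ) < 2*δ + α*b^k by positivity) hb)
      (mul_pos hδ hβ)) (sub_pos.2 htu)]

theorem Theta_continuous_monotone (k δ α : ℝ)
    (hk : k ∈ Set.Ioo (0:ℝ) 1) (hδ : 0 < δ) (hα : 0 < α) :
    ContinuousOn
      (fun q : ℝ × ℝ =>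
        q.1 * q.2 ^ k * (2 * δ + α * q.1 ^ k) /
            (2 * (δ * q.1 ^ k + δ * q.2 ^ k + α * q.1 ^ k * q.2 ^ k)) +
          q.2 * q.1 ^ k * (2 * δ + α * q.2 ^ k) /
            (2 * (δ * q.1 ^ k + δ * q.2 ^ k + α * q.1 ^ k * q.2 ^ k)))
      (Set.Ioi 0 ×ˢ Set.Ioi 0) ∧
    (∀ lamB ∈ Set.Ioi (0:ℝ),
      StrictMonoOn
        (fun lamG : ℝ =>
          lamG * lamB ^ k * (2 * δ + α * lamG ^ k) /
              (2 * (δ * lamG ^ k + δ * lamB ^ k + α * lamG ^ k * lamB ^ k)) +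
            lamB * lamG ^ k * (2 * δ + α * lamB ^ k) /
              (2 * (δ * lamG ^ k + δ * lamB ^ k + α * lamG ^ k * lamB ^ k)))
        (Set.Ioi 0)) ∧
    (∀ lamG ∈ Set.Ioi (0:ℝ),
      StrictMonoOn
        (fun lamB : ℝ =>
          lamG * lamB ^ k * (2 * δ + α * lamG ^ k) /
              (2 * (δ * lamG ^ k + δ * lamB ^ k + α * lamG ^ k * lamB ^ k)) +
            lamB * lamG ^ k * (2 * δ + α * lamB ^ k) /
              (2 * (δ * lamG ^ k + δ * lamB ^ k + α * lamG ^ k * lamB ^ k)))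
        (Set.Ioi 0)) := by
  refine ⟨?_, ?_, ?_⟩
  · -- continuity
    have h1 : ContinuousOn (fun q : ℝ × ℝ => q.1 ^ k) (Set.Ioi 0 ×ˢ Set.Ioi 0) :=
      continuousOn_fst.rpow_const (fun q _ => Or.inr hk.1.le)
    have h2 : ContinuousOn (fun q : ℝ × ℝ => q.2 ^ k) (Set.Ioi 0 ×ˢ Set.Ioi 0) :=
      continuousOn_snd.rpow_const (fun q _ => Or.inr hk.1.le)
    have hD : ∀ q ∈ (Set.Ioi (0:ℝ) ×ˢ Set.Ioi (0:ℝ)),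
        2 * (δ * q.1 ^ k + δ * q.2 ^ k + α * q.1 ^ k * q.2 ^ k) ≠ 0 := by
      intro q hq
      have h1 : (0:ℝ) < q.1 ^ k := Real.rpow_pos_of_pos hq.1 k
      have h2 : (0:ℝ) < q.2 ^ k := Real.rpow_pos_of_pos hq.2 k
      positivity
    have hDc : ContinuousOn
        (fun q : ℝ × ℝ => 2 * (δ * q.1 ^ k + δ * q.2 ^ k + α * q.1 ^ k * q.2 ^ k))
        (Set.Ioi 0 ×ˢ Set.Ioi 0) :=
      continuousOn_const.mul (((continuousOn_const.mul h1).add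
        (continuousOn_const.mul h2)).add ((continuousOn_const.mul h1).mul h2))
    exact (((continuousOn_fst.mul h2).mul
        (continuousOn_const.add (continuousOn_const.mul h1))).div hDc hD).add
      (((continuousOn_snd.mul h1).mul
        (continuousOn_const.add (continuousOn_const.mul h2))).div hDc hD)
  · intro lamB hlamB
    exact theta_mono_aux k δ α lamB hk hδ hα hlamB
  · intro lamG hlamG
    have h := theta_mono_aux k δ α lamG hk hδ hα hlamG
    have he : (fun x : ℝ =>
        x * lamG ^ k * (2 * δ + α * x ^ k) /
            (2 * (δ * x ^ k + δ * lamG ^ k + α * x ^ k * lamG ^ k)) +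
          lamG * x ^ k * (2 * δ + α * lamG ^ k) /
            (2 * (δ * x ^ k + δ * lamG ^ k + α * x ^ k * lamG ^ k))) =
        (fun lamB : ℝ =>
          lamG * lamB ^ k * (2 * δ + α * lamG ^ k) /
              (2 * (δ * lamG ^ k + δ * lamB ^ k + α * lamG ^ k * lamB ^ k)) +
            lamB * lamG ^ k * (2 * δ + α * lamB ^ k) /
              (2 * (δ * lamG ^ k + δ * lamB ^ k + α * lamG ^ k * lamB ^ k))) := by
      funext x; ring
    exact he ▸ h
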